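/- Let η ∈ M₂(ℤ) be primitive (the gcd of its four entries is 1) with det(η) ≠ 0, and let K ≥ 1 be an integer dividing det(η). If A ∈ M₂(ℤ) satisfies A·η ≡ 0 (mod K·M₂(ℤ)), then K divides det(A). -/

import Mathlib

/-- Let `η ∈ M₂(ℤ)` be primitive (any common divisor of its entries is a unit)
with `det η ≠ 0`, and let `K ≥ 1` divide `det η`. If `A·η ≡ 0 (mod K)`
entrywise, then `K ∣ det A`. -/
theorem det_dvd_of_mul_primitive_cong_zero
    (η : Matrix (Fin 2) (Fin 2) ℤ)
    (hprim : ∀ d : ℤ, (∀ i j, d ∣ η i j) → IsUnit d)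
    (hdet : η.det ≠ 0)
    (K : ℤ) (hK : 1 ≤ K) (hKdet : K ∣ η.det)
    (A : Matrix (Fin 2) (Fin 2) ℤ)
    (hA : ∀ i j, K ∣ (A * η) i j) :
    K ∣ A.det := by
  have key : ∀ i j, K ∣ A.det * η i j := by
    intro i j
    have h1 : (A.adjugate * (A * η)) i j = A.det * η i j := by
      rw [← Matrix.mul_assoc, Matrix.adjugate_mul, Matrix.smul_mul, Matrix.one_mul,
        Matrix.smul_apply, smul_eq_mul]
    rw [← h1, Matrix.mul_apply]
    exact Finset.dvd_sum fun l _ => Dvd.dvd.mul_left (hA l j) _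
  have hK0 : K ≠ 0 := by linarith
  set g : ℤ := (Int.gcd K A.det : ℤ) with hg
  have hgpos : 0 < Int.gcd K A.det := Int.gcd_pos_of_ne_zero_left _ hK0
  have hg0 : g ≠ 0 := by rw [hg]; exact_mod_cast hgpos.ne'
  have hgK : g ∣ K := Int.gcd_dvd_left _ _
  have hgA : g ∣ A.det := Int.gcd_dvd_right _ _
  have hKeq : g * (K / g) = K := Int.mul_ediv_cancel' hgK
  have hAeq : g * (A.det / g) = A.det := Int.mul_ediv_cancel' hgA
  have hcop : IsCoprime (K / g) (A.det / g) := by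
    rw [Int.isCoprime_iff_gcd_eq_one]
    exact Int.gcd_div_gcd_div_gcd hgpos
  have hdivη : ∀ i j, (K / g) ∣ η i j := by
    intro i j
    have : g * (K / g) ∣ g * ((A.det / g) * η i j) := by
      rw [hKeq, ← mul_assoc, hAeq]; exact key i j
    exact hcop.dvd_of_dvd_mul_left ((mul_dvd_mul_iff_left hg0).mp this)
  have hu : IsUnit (K / g) := hprim _ hdivη
  have hKg : K ∣ g := by
    rcases Int.isUnit_iff.mp hu with h | h
    · rw [← hKeq, h, mul_one]
    · rw [← hKeq, h, mul_neg_one]; exact (neg_dvd).mpr (dvd_refl g)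
  exact hKg.trans hgA
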